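/- Let A1 ∈ ℝ^{n1×n1}, B1 ∈ ℝ^{n1×m}, C1 ∈ ℝ^{m×n1}, D1 ∈ ℝ^{m×m} and A2 ∈ ℝ^{n2×n2}, B2 ∈ ℝ^{n2×m}, C2 ∈ ℝ^{m×n2}, D2 ∈ ℝ^{m×m} with D1, D2 symmetric and D1 D2 = 0. Suppose P1, P2 are symmetric positive definite and L1, L2 are real matrices such that A1 P1^{-1} + P1^{-1} A1^T = -L1^T L1, B1 + A1 P1^{-1} C1^T = 0, A2 P2^{-1} + P2^{-1} A2^T = -L2^T L2, and B2 + A2 P2^{-1} C2^T = 0, and suppose the block matrix Q = [[P1 - C1^T D2 C1, -C1^T C2], [-C2^T C1, P2 - C2^T D1 C2]] is positive definite. Then every complex eigenvalue of the closed-loop matrix Ă = [[A1 + B1 D2 C1, B1 C2], [B2 C1, A2 + B2 D1 C2]] has real part less than or equal to zero. -/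

import Mathlib

open Matrix

private lemma key_identity {n m l : Type*} [Fintype n] [Fintype m] [Fintype l] [DecidableEq n]
    (A X P : Matrix n n ℝ) (B : Matrix n m ℝ) (C : Matrix m n ℝ)
    (W : Matrix m m ℝ) (L : Matrix l n ℝ)
    (hXP : X * P = 1) (hX : Xᵀ = X) (hP : Pᵀ = P) (hW : Wᵀ = W)
    (ha : A * X + X * Aᵀ = -(Lᵀ * L)) (hb : B = -(A * X * Cᵀ)) :
    (A + B * W * C)ᵀ * (P - Cᵀ * W * C) + (P - Cᵀ * W * C) * (A + B * W * C)
      = -((P - Cᵀ * W * C) * (Lᵀ * L) * (P - Cᵀ * W * C)) := by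
  set Q : Matrix n n ℝ := P - Cᵀ * W * C with hQdef
  have hG : (Cᵀ * W * C)ᵀ = Cᵀ * W * C := by
    rw [transpose_mul, transpose_mul, transpose_transpose, hW, Matrix.mul_assoc]
  have hQ : Qᵀ = Q := by rw [hQdef, transpose_sub, hP, hG]
  have hAt : A + B * W * C = A * X * Q := by
    rw [hb, hQdef]
    simp only [sub_eq_add_neg, Matrix.mul_add, Matrix.mul_neg, Matrix.neg_mul,
      Matrix.mul_assoc, hXP, Matrix.mul_one]
  rw [hAt, transpose_mul, transpose_mul, hX, hQ]
  calc Q * (X * Aᵀ) * Q + Q * (A * X * Q)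
      = Q * ((A * X + X * Aᵀ) * Q) := by
        simp only [Matrix.add_mul, Matrix.mul_add, Matrix.mul_assoc]
        rw [add_comm]
    _ = -(Q * (Lᵀ * L) * Q) := by
        rw [ha]
        simp [Matrix.mul_assoc]

theorem stmt_13 {n1 n2 m l1 l2 : ℕ}
    (A1 : Matrix (Fin n1) (Fin n1) ℝ) (B1 : Matrix (Fin n1) (Fin m) ℝ)
    (C1 : Matrix (Fin m) (Fin n1) ℝ) (D1 : Matrix (Fin m) (Fin m) ℝ)
    (A2 : Matrix (Fin n2) (Fin n2) ℝ) (B2 : Matrix (Fin n2) (Fin m) ℝ)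
    (C2 : Matrix (Fin m) (Fin n2) ℝ) (D2 : Matrix (Fin m) (Fin m) ℝ)
    (P1 : Matrix (Fin n1) (Fin n1) ℝ) (P2 : Matrix (Fin n2) (Fin n2) ℝ)
    (L1 : Matrix (Fin l1) (Fin n1) ℝ) (L2 : Matrix (Fin l2) (Fin n2) ℝ)
    (hD1symm : D1ᵀ = D1) (hD2symm : D2ᵀ = D2) (hD12 : D1 * D2 = 0)
    (hP1symm : P1ᵀ = P1)
    (hP1pd : ∀ x : Fin n1 → ℝ, x ≠ 0 → 0 < x ⬝ᵥ P1.mulVec x)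
    (hP2symm : P2ᵀ = P2)
    (hP2pd : ∀ x : Fin n2 → ℝ, x ≠ 0 → 0 < x ⬝ᵥ P2.mulVec x)
    (h1a : A1 * P1⁻¹ + P1⁻¹ * A1ᵀ = -(L1ᵀ * L1))
    (h1b : B1 + A1 * P1⁻¹ * C1ᵀ = 0)
    (h2a : A2 * P2⁻¹ + P2⁻¹ * A2ᵀ = -(L2ᵀ * L2))
    (h2b : B2 + A2 * P2⁻¹ * C2ᵀ = 0)
    (hQpd : ∀ x : (Fin n1 ⊕ Fin n2) → ℝ, x ≠ 0 →
      0 < x ⬝ᵥ (Matrix.fromBlocks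
          (P1 - C1ᵀ * D2 * C1) (-(C1ᵀ * C2))
          (-(C2ᵀ * C1)) (P2 - C2ᵀ * D1 * C2)).mulVec x) :
    ∀ μ ∈ spectrum ℂ
        ((Matrix.fromBlocks (A1 + B1 * D2 * C1) (B1 * C2)
            (B2 * C1) (A2 + B2 * D1 * C2)).map Complex.ofReal),
      μ.re ≤ 0 := by
  intro μ hμ
  have pd1 : P1.PosDef := by
    refine Matrix.PosDef.of_dotProduct_mulVec_pos ?_ (fun x hx => ?_)
    · rw [Matrix.IsHermitian, conjTranspose_eq_transpose_of_trivial, hP1symm]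
    · simpa using hP1pd x hx
  have pd2 : P2.PosDef := by
    refine Matrix.PosDef.of_dotProduct_mulVec_pos ?_ (fun x hx => ?_)
    · rw [Matrix.IsHermitian, conjTranspose_eq_transpose_of_trivial, hP2symm]
    · simpa using hP2pd x hx
  have hu1 : IsUnit P1.det := pd1.det_pos.ne'.isUnit
  have hu2 : IsUnit P2.det := pd2.det_pos.ne'.isUnit
  have hP1inv : P1⁻¹ * P1 = 1 := Matrix.nonsing_inv_mul P1 hu1
  have hP2inv : P2⁻¹ * P2 = 1 := Matrix.nonsing_inv_mul P2 hu2
  have hX1symm : (P1⁻¹)ᵀ = P1⁻¹ := by rw [Matrix.transpose_nonsing_inv, hP1symm]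
  have hX2symm : (P2⁻¹)ᵀ = P2⁻¹ := by rw [Matrix.transpose_nonsing_inv, hP2symm]
  set 𝔸 : Matrix (Fin n1 ⊕ Fin n2) (Fin n1 ⊕ Fin n2) ℝ := fromBlocks A1 0 0 A2 with h𝔸
  set 𝕏 : Matrix (Fin n1 ⊕ Fin n2) (Fin n1 ⊕ Fin n2) ℝ := fromBlocks P1⁻¹ 0 0 P2⁻¹ with h𝕏
  set ℙ : Matrix (Fin n1 ⊕ Fin n2) (Fin n1 ⊕ Fin n2) ℝ := fromBlocks P1 0 0 P2 with hℙ
  set 𝔹 : Matrix (Fin n1 ⊕ Fin n2) (Fin m ⊕ Fin m) ℝ := fromBlocks B1 0 0 B2 with h𝔹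
  set ℭ : Matrix (Fin m ⊕ Fin m) (Fin n1 ⊕ Fin n2) ℝ := fromBlocks C1 0 0 C2 with hℭ
  set 𝕎 : Matrix (Fin m ⊕ Fin m) (Fin m ⊕ Fin m) ℝ := fromBlocks D2 1 1 D1 with h𝕎
  set 𝕃 : Matrix (Fin l1 ⊕ Fin l2) (Fin n1 ⊕ Fin n2) ℝ := fromBlocks L1 0 0 L2 with h𝕃
  set Q : Matrix (Fin n1 ⊕ Fin n2) (Fin n1 ⊕ Fin n2) ℝ :=
    Matrix.fromBlocks (P1 - C1ᵀ * D2 * C1) (-(C1ᵀ * C2)) (-(C2ᵀ * C1)) (P2 - C2ᵀ * D1 * C2)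
    with hQdef
  set M : Matrix (Fin n1 ⊕ Fin n2) (Fin n1 ⊕ Fin n2) ℝ :=
    Matrix.fromBlocks (A1 + B1 * D2 * C1) (B1 * C2) (B2 * C1) (A2 + B2 * D1 * C2) with hMdef
  have hXP : 𝕏 * ℙ = 1 := by
    rw [h𝕏, hℙ, fromBlocks_multiply]
    simp [hP1inv, hP2inv, ← fromBlocks_one]
  have hXsym : 𝕏ᵀ = 𝕏 := by
    rw [h𝕏, fromBlocks_transpose]
    simp [hX1symm, hX2symm]
  have hPsym : ℙᵀ = ℙ := by
    rw [hℙ, fromBlocks_transpose]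
    simp [hP1symm, hP2symm]
  have hWsym : 𝕎ᵀ = 𝕎 := by
    rw [h𝕎, fromBlocks_transpose]
    simp [hD1symm, hD2symm]
  have hbiga : 𝔸 * 𝕏 + 𝕏 * 𝔸ᵀ = -(𝕃ᵀ * 𝕃) := by
    rw [h𝔸, h𝕏, h𝕃]
    simp only [fromBlocks_transpose, fromBlocks_multiply, fromBlocks_add, fromBlocks_neg,
      transpose_zero, Matrix.mul_zero, Matrix.zero_mul, add_zero, zero_add, neg_zero]
    rw [fromBlocks_inj]
    exact ⟨h1a, rfl, rfl, h2a⟩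
  have hbigb : 𝔹 = -(𝔸 * 𝕏 * ℭᵀ) := by
    have hB1 : B1 = -(A1 * P1⁻¹ * C1ᵀ) := eq_neg_of_add_eq_zero_left h1b
    have hB2 : B2 = -(A2 * P2⁻¹ * C2ᵀ) := eq_neg_of_add_eq_zero_left h2b
    rw [h𝔹, h𝔸, h𝕏, hℭ]
    simp only [fromBlocks_transpose, fromBlocks_multiply, fromBlocks_neg,
      transpose_zero, Matrix.mul_zero, Matrix.zero_mul, add_zero, zero_add, neg_zero]
    rw [fromBlocks_inj]
    refine ⟨?_, rfl, rfl, ?_⟩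
    · rw [hB1, Matrix.mul_assoc]
    · rw [hB2, Matrix.mul_assoc]
  have hQeq : Q = ℙ - ℭᵀ * 𝕎 * ℭ := by
    rw [hQdef, hℙ, hℭ, h𝕎]
    simp only [fromBlocks_transpose, fromBlocks_multiply, sub_eq_add_neg, fromBlocks_neg,
      fromBlocks_add, transpose_zero, Matrix.mul_zero, Matrix.zero_mul, Matrix.mul_one,
      Matrix.one_mul, add_zero, zero_add, neg_zero]
  have hMeq : M = 𝔸 + 𝔹 * 𝕎 * ℭ := by
    rw [hMdef, h𝔸, h𝔹, hℭ, h𝕎]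
    simp only [fromBlocks_multiply, fromBlocks_add, Matrix.mul_zero, Matrix.zero_mul,
      Matrix.mul_one, Matrix.one_mul, add_zero, zero_add]
  have key : Mᵀ * Q + Q * M = -(Q * (𝕃ᵀ * 𝕃) * Q) := by
    rw [hMeq, hQeq]
    exact key_identity 𝔸 𝕏 ℙ 𝔹 ℭ 𝕎 𝕃 hXP hXsym hPsym hWsym hbiga hbigb
  have hQsym : Qᵀ = Q := by
    rw [hQeq, transpose_sub, hPsym, transpose_mul, transpose_mul, transpose_transpose, hWsym,
      Matrix.mul_assoc]
  have hQdot : ∀ x y : (Fin n1 ⊕ Fin n2) → ℝ, x ⬝ᵥ Q *ᵥ y = (Q *ᵥ x) ⬝ᵥ y := by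
    intro x y
    rw [dotProduct_mulVec, ← hQsym, vecMul_transpose, hQsym]
  have hsemi : ∀ x : (Fin n1 ⊕ Fin n2) → ℝ, x ⬝ᵥ (Mᵀ * Q + Q * M) *ᵥ x ≤ 0 := by
    intro x
    rw [key]
    have h1 : (-(Q * (𝕃ᵀ * 𝕃) * Q)) *ᵥ x = -(Q *ᵥ (𝕃ᵀ *ᵥ (𝕃 *ᵥ (Q *ᵥ x)))) := by
      simp [mulVec_mulVec, neg_mulVec, Matrix.mul_assoc]
    rw [h1, dotProduct_neg, neg_nonpos, hQdot, dotProduct_mulVec, vecMul_transpose]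
    simpa using dotProduct_self_star_nonneg (𝕃 *ᵥ (Q *ᵥ x))
  -- extract a complex eigenvector
  set Mc : Matrix (Fin n1 ⊕ Fin n2) (Fin n1 ⊕ Fin n2) ℂ := M.map Complex.ofReal with hMc
  have hnu : ¬IsUnit (algebraMap ℂ (Matrix (Fin n1 ⊕ Fin n2) (Fin n1 ⊕ Fin n2) ℂ) μ - Mc) :=
    spectrum.mem_iff.mp hμ
  have hdet : (algebraMap ℂ (Matrix (Fin n1 ⊕ Fin n2) (Fin n1 ⊕ Fin n2) ℂ) μ - Mc).det = 0 := by
    by_contra h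
    exact hnu ((Matrix.isUnit_iff_isUnit_det _).mpr (isUnit_iff_ne_zero.mpr h))
  obtain ⟨v, hv0, hv⟩ := (Matrix.exists_mulVec_eq_zero_iff).mpr hdet
  have hev : Mc *ᵥ v = μ • v := by
    have h2 := hv
    rw [sub_mulVec, Algebra.algebraMap_eq_smul_one, smul_mulVec, one_mulVec,
      sub_eq_zero] at h2
    exact h2.symm
  set a : (Fin n1 ⊕ Fin n2) → ℝ := fun i => (v i).re with hadef
  set b : (Fin n1 ⊕ Fin n2) → ℝ := fun i => (v i).im with hbdef
  have hva : M *ᵥ a = μ.re • a - μ.im • b := by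
    funext i
    have h := congrArg Complex.re (congrFun hev i)
    simp only [hMc, mulVec, dotProduct, Matrix.map_apply, Pi.smul_apply, smul_eq_mul,
      Complex.re_sum, Complex.re_ofReal_mul, Complex.mul_re] at h
    simpa [mulVec, dotProduct, hadef, hbdef] using h
  have hvb : M *ᵥ b = μ.im • a + μ.re • b := by
    funext i
    have h := congrArg Complex.im (congrFun hev i)
    simp only [hMc, mulVec, dotProduct, Matrix.map_apply, Pi.smul_apply, smul_eq_mul,
      Complex.im_sum, Complex.im_ofReal_mul, Complex.mul_im] at h
    simpa [mulVec, dotProduct, hadef, hbdef, add_comm] using h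
  have hab : a ≠ 0 ∨ b ≠ 0 := by
    by_contra h
    push_neg at h
    apply hv0
    funext i
    have h1 : a i = 0 := by rw [h.1]; rfl
    have h2 : b i = 0 := by rw [h.2]; rfl
    exact Complex.ext h1 h2
  have hQnonneg : ∀ x : (Fin n1 ⊕ Fin n2) → ℝ, 0 ≤ x ⬝ᵥ Q *ᵥ x := by
    intro x
    rcases eq_or_ne x 0 with h | h
    · simp [h]
    · exact (hQpd x h).le
  have hq : 0 < a ⬝ᵥ Q *ᵥ a + b ⬝ᵥ Q *ᵥ b := by
    rcases hab with h | h
    · exact add_pos_of_pos_of_nonneg (hQpd a h) (hQnonneg b)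
    · exact add_pos_of_nonneg_of_pos (hQnonneg a) (hQpd b h)
  have hdot : ∀ x : (Fin n1 ⊕ Fin n2) → ℝ,
      x ⬝ᵥ (Mᵀ * Q + Q * M) *ᵥ x = 2 * ((M *ᵥ x) ⬝ᵥ (Q *ᵥ x)) := by
    intro x
    rw [add_mulVec, dotProduct_add, ← mulVec_mulVec, ← mulVec_mulVec,
      dotProduct_mulVec x Mᵀ, vecMul_transpose, hQdot x (M *ᵥ x), dotProduct_comm (Q *ᵥ x) (M *ᵥ x), two_mul]
  have htotal : (M *ᵥ a) ⬝ᵥ (Q *ᵥ a) + (M *ᵥ b) ⬝ᵥ (Q *ᵥ b)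
      = μ.re * (a ⬝ᵥ Q *ᵥ a + b ⬝ᵥ Q *ᵥ b) := by
    have hsym : a ⬝ᵥ Q *ᵥ b = b ⬝ᵥ Q *ᵥ a := by
      rw [hQdot, dotProduct_comm]
    rw [hva, hvb, sub_dotProduct, add_dotProduct, smul_dotProduct, smul_dotProduct,
      smul_dotProduct, smul_dotProduct]
    simp only [smul_eq_mul]
    rw [hsym]
    ring
  have h1 := hsemi a
  have h2 := hsemi b
  rw [hdot a] at h1
  rw [hdot b] at h2
  have hsum : (M *ᵥ a) ⬝ᵥ (Q *ᵥ a) + (M *ᵥ b) ⬝ᵥ (Q *ᵥ b) ≤ 0 := by linarith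
  rw [htotal] at hsum
  exact le_of_not_gt fun h => absurd hsum (not_le.mpr (mul_pos h hq))
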